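/- Let G1 be a connected δ1-regular graph on n vertices and G2 be a connected δ2-regular graph on δ1 vertices, and write κ1 = κ(G1) and λi = λ(Gi) for i = 1,2. Then: (a) λ(G1®G2) = 1 if λ1 = 1; (b) λ(G1®G2) = λ1 if λ2 ≥ λ1; (c) λ(G1®G2) = λ1 if κ1 ≥ 2 and λ2 ≥ λ1−1; (d) λ(G1®G2) = min{λ1, δ2+1} if κ1 ≥ 2 and λ2 = δ2. -/

import Mathlib

open SimpleGraph

section Defs

variable {V : Type*}

/-- The set of edges of `G` with one endpoint in `X` and the other outside `X`. -/
def edgeBoundary (G : SimpleGraph V) (X : Set V) : Set (Sym2 V) :=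
  {e | e ∈ G.edgeSet ∧ ∃ u ∈ X, ∃ v ∈ Xᶜ, e = s(u, v)}

/-- The edge-connectivity `λ(G)`: the minimum number of edges whose removal disconnects `G`. -/
noncomputable def edgeConn (G : SimpleGraph V) : ℕ :=
  sInf {k | ∃ F : Set (Sym2 V), F ⊆ G.edgeSet ∧ F.ncard = k ∧ ¬(G.deleteEdges F).Connected}

/-- `F` is a restricted edge-cut of `G`: removing `F` disconnects `G` and leaves no
isolated vertices. -/
def IsRestrictedEdgeCut (G : SimpleGraph V) (F : Set (Sym2 V)) : Prop :=
  F ⊆ G.edgeSet ∧ ¬(G.deleteEdges F).Connected ∧ ∀ v : V, ∃ w : V, (G.deleteEdges F).Adj v w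

/-- The restricted edge-connectivity `λ'(G)`. -/
noncomputable def restrictedEdgeConn (G : SimpleGraph V) : ℕ :=
  sInf {k | ∃ F : Set (Sym2 V), IsRestrictedEdgeCut G F ∧ F.ncard = k}

/-- The vertex-connectivity `κ(G)`: the minimum size of a set of vertices whose removal
leaves a disconnected graph or a graph with at most one vertex. -/
noncomputable def vertexConn (G : SimpleGraph V) : ℕ :=
  sInf {k | ∃ S : Set V, S.ncard = k ∧
    (¬(G.induce (Sᶜ : Set V)).Connected ∨ (Sᶜ : Set V).ncard ≤ 1)}

/-- The minimum edge-degree `ξ(G) = min {d(u) + d(v) - 2 : uv ∈ E(G)}`. -/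
noncomputable def minEdgeDegree (G : SimpleGraph V) : ℕ :=
  sInf {k | ∃ u v : V, G.Adj u v ∧ (G.neighborSet u).ncard + (G.neighborSet v).ncard - 2 = k}

/-- `G` is `λ'`-optimal if `λ'(G) = ξ(G)`. -/
def LambdaPrimeOptimal (G : SimpleGraph V) : Prop :=
  restrictedEdgeConn G = minEdgeDegree G

/-- The replacement product of `G1` and `G2` with respect to an edge-labelling `ℓ`,
where `ℓ x i` is the other endpoint of the edge of `G1` labelled `i` at the vertex `x`.
Vertices `(x, i)` and `(y, j)` are adjacent iff either `x = y` and `i j ∈ E(G2)`, or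
`x y ∈ E(G1)` and the edge `x y` is labelled `i` at `x` and `j` at `y`. -/
def replacementProduct {V1 V2 : Type*} (G1 : SimpleGraph V1) (G2 : SimpleGraph V2)
    (ℓ : V1 → V2 → V1) : SimpleGraph (V1 × V2) where
  Adj p q := (p.1 = q.1 ∧ G2.Adj p.2 q.2) ∨
    (G1.Adj p.1 q.1 ∧ ℓ p.1 p.2 = q.1 ∧ ℓ q.1 q.2 = p.1)
  symm := ⟨by
    rintro p q (⟨h1, h2⟩ | ⟨h1, h2, h3⟩)
    · exact Or.inl ⟨h1.symm, h2.symm⟩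
    · exact Or.inr ⟨h1.symm, h3, h2⟩⟩
  loopless := ⟨by
    rintro p (⟨_, h⟩ | ⟨h, _⟩)
    · exact G2.loopless.1 _ h
    · exact G1.loopless.1 _ h⟩

/-- `ℓ` is a valid edge-labelling of `G1` for the replacement product:
for each vertex `x`, `ℓ x` is injective and `ℓ x i` is always a neighbour of `x`
(hence `ℓ x` enumerates the neighbours of `x` when `G1` is `|V2|`-regular). -/
def IsRPLabelling {V1 V2 : Type*} (G1 : SimpleGraph V1) (ℓ : V1 → V2 → V1) : Prop :=
  (∀ x, Function.Injective (ℓ x)) ∧ ∀ x i, G1.Adj x (ℓ x i)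

end Defs

section AuxLemmas

variable {V : Type*}

lemma edgeConn_le_of_cut {G : SimpleGraph V} {F : Set (Sym2 V)} (hF : F ⊆ G.edgeSet)
    (hc : ¬(G.deleteEdges F).Connected) : edgeConn G ≤ F.ncard :=
  Nat.sInf_le ⟨F, hF, rfl, hc⟩

lemma connected_deleteEdges_of_lt {G : SimpleGraph V} {F : Set (Sym2 V)} (hF : F ⊆ G.edgeSet)
    (h : F.ncard < edgeConn G) : (G.deleteEdges F).Connected := by
  by_contra hc
  exact absurd (edgeConn_le_of_cut hF hc) (not_le.mpr h)

lemma adj_of_reachable_ne {G : SimpleGraph V} {u v : V} (h : G.Reachable u v) (hne : u ≠ v) :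
    ∃ w, G.Adj u w := by
  obtain ⟨w⟩ := h
  cases w with
  | nil => exact absurd rfl hne
  | cons h _ => exact ⟨_, h⟩

lemma induce_compl_connected [Fintype V] {G : SimpleGraph V} (h2 : 2 ≤ vertexConn G) (x : V) :
    (G.induce ({x}ᶜ : Set V)).Connected ∧ 2 ≤ ({x}ᶜ : Set V).ncard := by
  by_contra hc
  have h1 : vertexConn G ≤ 1 := by
    apply Nat.sInf_le
    refine ⟨{x}, Set.ncard_singleton x, ?_⟩
    rcases not_and_or.mp hc with h | h
    · exact Or.inl h
    · exact Or.inr (by omega)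
  omega

end AuxLemmas

section MainLemmas

variable {V1 V2 : Type*} [Fintype V1] [Fintype V2]
variable {G1 : SimpleGraph V1} {G2 : SimpleGraph V2} {ℓ : V1 → V2 → V1}

lemma label_surj (hℓ : IsRPLabelling G1 ℓ) {δ1 : ℕ} (hr1 : ∀ x, (G1.neighborSet x).ncard = δ1)
    (hd : Fintype.card V2 = δ1) {x y : V1} (hxy : G1.Adj x y) : ∃ i, ℓ x i = y := by
  classical
  letI : Fintype (G1.neighborSet x) := Fintype.ofFinite _
  let f : V2 → G1.neighborSet x := fun i => ⟨ℓ x i, hℓ.2 x i⟩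
  have hinj : Function.Injective f := fun i j h =>
    hℓ.1 x (by simpa [f] using congrArg Subtype.val h)
  have hcard : Fintype.card V2 = Fintype.card (G1.neighborSet x) := by
    rw [hd, ← hr1 x, ← Nat.card_coe_set_eq, Nat.card_eq_fintype_card]
  have hsurj : Function.Surjective f :=
    ((Fintype.bijective_iff_injective_and_card f).mpr ⟨hinj, hcard⟩).2
  obtain ⟨i, hi⟩ := hsurj ⟨y, hxy⟩
  exact ⟨i, congrArg Subtype.val hi⟩

lemma rp_adj {p q : V1 × V2} : (replacementProduct G1 G2 ℓ).Adj p q ↔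
    (p.1 = q.1 ∧ G2.Adj p.2 q.2) ∨ (G1.Adj p.1 q.1 ∧ ℓ p.1 p.2 = q.1 ∧ ℓ q.1 q.2 = p.1) :=
  Iff.rfl

/-- Reachability within a cloud. -/
lemma cloud_reach {F : Set (Sym2 (V1 × V2))} (x : V1)
    (hcon : (G2.deleteEdges {e ∈ G2.edgeSet | Sym2.map (fun i => (x, i)) e ∈ F}).Connected)
    (i j : V2) : ((replacementProduct G1 G2 ℓ).deleteEdges F).Reachable (x, i) (x, j) := by
  let φ : G2.deleteEdges {e ∈ G2.edgeSet | Sym2.map (fun i => (x, i)) e ∈ F} →g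
      (replacementProduct G1 G2 ℓ).deleteEdges F :=
    ⟨fun i => (x, i), by
      intro a b hab
      rw [SimpleGraph.deleteEdges_adj] at hab ⊢
      refine ⟨Or.inl ⟨rfl, hab.1⟩, fun hmem => ?_⟩
      exact hab.2 ⟨G2.mem_edgeSet.mpr hab.1, by rw [Sym2.map_pair_eq]; exact hmem⟩⟩
  exact Reachable.map φ (hcon.preconnected i j)

/-- Lifting a walk of `G1 − B` to the replacement product. -/
lemma walk_lift (hℓ : IsRPLabelling G1 ℓ) {δ1 : ℕ}
    (hr1 : ∀ x, (G1.neighborSet x).ncard = δ1) (hd : Fintype.card V2 = δ1)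
    {F : Set (Sym2 (V1 × V2))} {B : Set (Sym2 V1)}
    (hcloud : ∀ (x : V1) (i j : V2),
      ((replacementProduct G1 G2 ℓ).deleteEdges F).Reachable (x, i) (x, j))
    (hcross : ∀ ⦃x y : V1⦄, (G1.deleteEdges B).Adj x y → ∀ i j, ℓ x i = y → ℓ y j = x →
      s((x, i), (y, j)) ∉ F) :
    ∀ {x y : V1} (_ : (G1.deleteEdges B).Walk x y) (i j : V2),
      ((replacementProduct G1 G2 ℓ).deleteEdges F).Reachable (x, i) (y, j) := by
  intro x y w
  induction w with
  | nil => exact fun i j => hcloud _ i j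
  | @cons u v w h p ih =>
    intro i j
    have huv : G1.Adj u v := (SimpleGraph.deleteEdges_adj.mp h).1
    obtain ⟨i1, hi1⟩ := label_surj hℓ hr1 hd huv
    obtain ⟨j1, hj1⟩ := label_surj hℓ hr1 hd huv.symm
    have hadj : ((replacementProduct G1 G2 ℓ).deleteEdges F).Adj (u, i1) (v, j1) := by
      rw [SimpleGraph.deleteEdges_adj]
      exact ⟨Or.inr ⟨huv, hi1, hj1⟩, hcross h i1 j1 hi1 hj1⟩
    exact ((hcloud u i i1).trans hadj.reachable).trans (ih j1 j)

/-- General connectivity criterion for the replacement product minus an edge set. -/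
lemma rp_conn_aux (hℓ : IsRPLabelling G1 ℓ) {δ1 : ℕ}
    (hr1 : ∀ x, (G1.neighborSet x).ncard = δ1) (hd : Fintype.card V2 = δ1)
    (hV2 : Nonempty V2)
    {F : Set (Sym2 (V1 × V2))} {B : Set (Sym2 V1)}
    (hBconn : (G1.deleteEdges B).Connected)
    (hcloud : ∀ (x : V1) (i j : V2),
      ((replacementProduct G1 G2 ℓ).deleteEdges F).Reachable (x, i) (x, j))
    (hcross : ∀ ⦃x y : V1⦄, (G1.deleteEdges B).Adj x y → ∀ i j, ℓ x i = y → ℓ y j = x →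
      s((x, i), (y, j)) ∉ F) :
    ((replacementProduct G1 G2 ℓ).deleteEdges F).Connected := by
  rw [SimpleGraph.connected_iff]
  refine ⟨fun p q => ?_, ⟨(hBconn.nonempty.some, hV2.some)⟩⟩
  obtain ⟨w⟩ := hBconn.preconnected p.1 q.1
  have := walk_lift hℓ hr1 hd hcloud hcross w p.2 q.2
  simpa using this

end MainLemmas

section UBLemmas

variable {V1 V2 : Type*} [Fintype V1] [Fintype V2]
variable {G1 : SimpleGraph V1} {G2 : SimpleGraph V2} {ℓ : V1 → V2 → V1}

/-- Projecting reachability in the replacement product down to `G1`. -/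
lemma proj_reach {F : Set (Sym2 (V1 × V2))} {E : Set (Sym2 V1)}
    (h : ∀ p q : V1 × V2, ((replacementProduct G1 G2 ℓ).deleteEdges F).Adj p q →
      p.1 = q.1 ∨ (G1.deleteEdges E).Adj p.1 q.1) :
    ∀ {p q : V1 × V2}, ((replacementProduct G1 G2 ℓ).deleteEdges F).Reachable p q →
      (G1.deleteEdges E).Reachable p.1 q.1 := by
  intro p q hr
  obtain ⟨w⟩ := hr
  induction w with
  | nil => exact Reachable.refl _
  | @cons u v w hadj p ih =>
    rcases h _ _ hadj with he | ha
    · exact he ▸ ih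
    · exact ha.reachable.trans ih

/-- The canonical lift of a `G1`-edge-cut into the replacement product, with the same
cardinality, still disconnects. -/
lemma rp_cut_mem (hℓ : IsRPLabelling G1 ℓ) {δ1 : ℕ}
    (hr1 : ∀ x, (G1.neighborSet x).ncard = δ1) (hd : Fintype.card V2 = δ1)
    (hV2 : Nonempty V2) (hV1 : Nonempty V1)
    {Fstar : Set (Sym2 V1)} (hsub : Fstar ⊆ G1.edgeSet)
    (hdis : ¬(G1.deleteEdges Fstar).Connected) :
    ∃ F : Set (Sym2 (V1 × V2)), F ⊆ (replacementProduct G1 G2 ℓ).edgeSet ∧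
      F.ncard = Fstar.ncard ∧
      ¬((replacementProduct G1 G2 ℓ).deleteEdges F).Connected := by
  classical
  set RP := replacementProduct G1 G2 ℓ with hRP
  refine ⟨{e ∈ RP.edgeSet | Sym2.map Prod.fst e ∈ Fstar}, fun e he => he.1, ?_, ?_⟩
  · -- cardinality: Sym2.map Prod.fst is injective on this set with image Fstar
    have himg : Sym2.map Prod.fst '' {e ∈ RP.edgeSet | Sym2.map Prod.fst e ∈ Fstar} = Fstar := by
      apply Set.Subset.antisymm
      · rintro e ⟨e', he', rfl⟩; exact he'.2
      · intro e he
        induction e using Sym2.ind with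
        | _ x y =>
          have hadj : G1.Adj x y := G1.mem_edgeSet.mp (hsub he)
          obtain ⟨i, hi⟩ := label_surj hℓ hr1 hd hadj
          obtain ⟨j, hj⟩ := label_surj hℓ hr1 hd hadj.symm
          refine ⟨s((x, i), (y, j)), ⟨?_, ?_⟩, ?_⟩
          · exact RP.mem_edgeSet.mpr (Or.inr ⟨hadj, hi, hj⟩)
          · rw [Sym2.map_pair_eq]; exact he
          · rw [Sym2.map_pair_eq]
    have hinj : Set.InjOn (Sym2.map Prod.fst)
        {e ∈ RP.edgeSet | Sym2.map Prod.fst e ∈ Fstar} := by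
      rintro e1 he1 e2 he2 heq
      induction e1 using Sym2.ind with
      | _ p q =>
        induction e2 using Sym2.ind with
        | _ p' q' =>
          rw [Sym2.map_pair_eq, Sym2.map_pair_eq] at heq
          -- both are cross edges
          have hne : p.1 ≠ q.1 := by
            intro hcon
            have : s(p.1, q.1) ∈ G1.edgeSet := hsub he1.2
            rw [hcon] at this
            exact G1.irrefl (G1.mem_edgeSet.mp this)
          have hne' : p'.1 ≠ q'.1 := by
            intro hcon
            have : s(p'.1, q'.1) ∈ G1.edgeSet := hsub he2.2
            rw [hcon] at this
            exact G1.irrefl (G1.mem_edgeSet.mp this)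
          have h1 : RP.Adj p q := RP.mem_edgeSet.mp he1.1
          have h2 : RP.Adj p' q' := RP.mem_edgeSet.mp he2.1
          rcases h1 with ⟨h, _⟩ | ⟨_, hpq1, hpq2⟩
          · exact absurd h hne
          rcases h2 with ⟨h, _⟩ | ⟨_, hpq1', hpq2'⟩
          · exact absurd h hne'
          rcases Sym2.eq_iff.mp heq with ⟨ha, hb⟩ | ⟨ha, hb⟩
          · -- p.1 = p'.1, q.1 = q'.1
            have hp2 : p.2 = p'.2 := by
              apply hℓ.1 p.1
              rw [hpq1, ha, hpq1', hb]
            have hq2 : q.2 = q'.2 := by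
              apply hℓ.1 q.1
              rw [hpq2, hb, hpq2', ha]
            rw [show p = p' from Prod.ext ha hp2, show q = q' from Prod.ext hb hq2]
          · -- p.1 = q'.1, q.1 = p'.1
            have hp2 : p.2 = q'.2 := by
              apply hℓ.1 p.1
              rw [hpq1, ha, hpq2', hb]
            have hq2 : q.2 = p'.2 := by
              apply hℓ.1 q.1
              rw [hpq2, hb, hpq1', ha]
            rw [show p = q' from Prod.ext ha hp2, show q = p' from Prod.ext hb hq2,
              Sym2.eq_swap]
    have h2 := Set.ncard_image_of_injOn hinj
    rw [himg] at h2
    exact h2.symm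
  · -- disconnection
    intro hcon
    apply hdis
    rw [SimpleGraph.connected_iff]
    refine ⟨fun x y => ?_, hV1⟩
    have hproj : ∀ p q : V1 × V2,
        (RP.deleteEdges {e ∈ RP.edgeSet | Sym2.map Prod.fst e ∈ Fstar}).Adj p q →
        p.1 = q.1 ∨ (G1.deleteEdges Fstar).Adj p.1 q.1 := by
      intro p q hadj
      rw [SimpleGraph.deleteEdges_adj] at hadj
      by_cases hfst : p.1 = q.1
      · exact Or.inl hfst
      · refine Or.inr (SimpleGraph.deleteEdges_adj.mpr ⟨?_, fun hmem => ?_⟩)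
        · rcases hadj.1 with ⟨h, _⟩ | ⟨h, _⟩
          · exact absurd h hfst
          · exact h
        · exact hadj.2 ⟨RP.mem_edgeSet.mpr hadj.1, by rw [Sym2.map_pair_eq]; exact hmem⟩
    have := proj_reach hproj
      (hcon.preconnected (x, hV2.some) (y, hV2.some))
    simpa using this

/-- Star cut: the replacement product has a vertex of degree `δ2 + 1`. -/
lemma rp_star_cut_mem (hℓ : IsRPLabelling G1 ℓ) {δ1 δ2 : ℕ}
    (hr1 : ∀ x, (G1.neighborSet x).ncard = δ1) (hd : Fintype.card V2 = δ1)
    (hr2 : ∀ i : V2, (G2.neighborSet i).ncard = δ2)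
    (hV2 : Nonempty V2) (x0 y0 : V1) (hne : y0 ≠ x0) :
    ∃ F : Set (Sym2 (V1 × V2)), F ⊆ (replacementProduct G1 G2 ℓ).edgeSet ∧
      F.ncard = δ2 + 1 ∧
      ¬((replacementProduct G1 G2 ℓ).deleteEdges F).Connected := by
  classical
  set RP := replacementProduct G1 G2 ℓ with hRP
  obtain ⟨i0⟩ := hV2
  have hy : G1.Adj x0 (ℓ x0 i0) := hℓ.2 x0 i0
  obtain ⟨j1, hj1⟩ := label_surj hℓ hr1 hd hy.symm
  refine ⟨RP.incidenceSet (x0, i0), RP.incidenceSet_subset _, ?_, ?_⟩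
  · -- cardinality = degree = δ2 + 1
    have hcard : (RP.incidenceSet (x0, i0)).ncard = (RP.neighborSet (x0, i0)).ncard := by
      rw [← Nat.card_coe_set_eq, ← Nat.card_coe_set_eq]
      exact Nat.card_congr (RP.incidenceSetEquivNeighborSet (x0, i0))
    rw [hcard]
    have hset : RP.neighborSet (x0, i0) =
        (fun j => (x0, j)) '' (G2.neighborSet i0) ∪ {(ℓ x0 i0, j1)} := by
      ext q
      constructor
      · intro hq
        rcases hq with ⟨h1, h2⟩ | ⟨h1, h2, h3⟩
        · exact Or.inl ⟨q.2, h2, by exact Prod.ext h1 rfl⟩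
        · refine Or.inr ?_
          have hq1 : ℓ x0 i0 = q.1 := by simpa using h2
          have hq2 : q.2 = j1 := by
            apply hℓ.1 (ℓ x0 i0)
            rw [hj1, hq1]
            simpa using h3
          simp only [Set.mem_singleton_iff]
          exact Prod.ext hq1.symm hq2
      · intro hq
        rcases hq with ⟨j, hj, hq⟩ | hq
        · rw [← hq]; exact Or.inl ⟨rfl, hj⟩
        · rw [Set.mem_singleton_iff] at hq
          rw [hq]; exact Or.inr ⟨hy, rfl, hj1⟩
    have hinj2 : Function.Injective (fun j : V2 => (x0, j)) := fun a b h => by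
      simpa using congrArg Prod.snd h
    have hdisj : Disjoint ((fun j => (x0, j)) '' (G2.neighborSet i0)) {(ℓ x0 i0, j1)} := by
      rw [Set.disjoint_singleton_right]
      rintro ⟨j, _, hj⟩
      exact hy.ne (congrArg Prod.fst hj)
    rw [hset, Set.ncard_union_eq hdisj, Set.ncard_image_of_injective _ hinj2,
      Set.ncard_singleton, hr2 i0]
  · -- disconnection: p0 is isolated
    intro hcon
    have hiso : ∀ r, ¬(RP.deleteEdges (RP.incidenceSet (x0, i0))).Adj (x0, i0) r := by
      intro r hr
      rw [SimpleGraph.deleteEdges_adj] at hr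
      exact hr.2 ⟨RP.mem_edgeSet.mpr hr.1, Sym2.mem_mk_left (x0, i0) r⟩
    obtain ⟨r, hr⟩ := adj_of_reachable_ne (hcon.preconnected (x0, i0) (y0, i0))
      (fun h => hne (congrArg Prod.fst h).symm)
    exact hiso r hr

end UBLemmas

section LowerLemmas

variable {V1 V2 : Type*} [Fintype V1] [Fintype V2]
variable {G1 : SimpleGraph V1} {G2 : SimpleGraph V2} {ℓ : V1 → V2 → V1}

lemma cloud_preimage_card_le (x : V1) (F : Set (Sym2 (V1 × V2))) :
    ({e ∈ G2.edgeSet | Sym2.map (fun i => (x, i)) e ∈ F} : Set (Sym2 V2)).ncard ≤ F.ncard := by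
  have hinj : Function.Injective (Sym2.map (fun i : V2 => (x, i))) :=
    Sym2.map.injective (fun a b h => by simpa using congrArg Prod.snd h)
  calc ({e ∈ G2.edgeSet | Sym2.map (fun i => (x, i)) e ∈ F} : Set (Sym2 V2)).ncard
      = (Sym2.map (fun i : V2 => (x, i)) ''
          {e ∈ G2.edgeSet | Sym2.map (fun i => (x, i)) e ∈ F}).ncard :=
        (Set.ncard_image_of_injective _ hinj).symm
    _ ≤ F.ncard := Set.ncard_le_ncard (by rintro _ ⟨e, he, rfl⟩; exact he.2) (Set.toFinite F)

lemma rp_lower (hℓ : IsRPLabelling G1 ℓ) (hc2 : G2.Connected) {δ1 : ℕ}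
    (hr1 : ∀ x, (G1.neighborSet x).ncard = δ1) (hd : Fintype.card V2 = δ1)
    (hV2 : Nonempty V2)
    {F : Set (Sym2 (V1 × V2))}
    (hF1 : F.ncard < edgeConn G1)
    (hF2 : F.ncard < edgeConn G2 ∨ (2 ≤ vertexConn G1 ∧ F.ncard ≤ edgeConn G2)) :
    ((replacementProduct G1 G2 ℓ).deleteEdges F).Connected := by
  classical
  by_cases hbig : ∃ x0 : V1, edgeConn G2 ≤
      ({e ∈ G2.edgeSet | Sym2.map (fun i => (x0, i)) e ∈ F} : Set (Sym2 V2)).ncard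
  · -- one cloud absorbs the whole cut
    obtain ⟨x0, hx0big⟩ := hbig
    have hle := cloud_preimage_card_le (G2 := G2) x0 F
    rcases hF2 with h | ⟨hκ, hFle⟩
    · omega
    -- F is exactly the image of its trace on cloud x0
    have him : Sym2.map (fun i : V2 => (x0, i)) ''
        {e ∈ G2.edgeSet | Sym2.map (fun i => (x0, i)) e ∈ F} = F := by
      refine Set.eq_of_subset_of_ncard_le ?_ ?_ (Set.toFinite F)
      · rintro _ ⟨e, he, rfl⟩; exact he.2
      · rw [Set.ncard_image_of_injective _
          (Sym2.map.injective (fun a b h => by simpa using congrArg Prod.snd h))]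
        omega
    have hFin : ∀ p q : V1 × V2, s(p, q) ∈ F → p.1 = x0 ∧ q.1 = x0 := by
      intro p q hpq
      rw [← him] at hpq
      obtain ⟨e, _, heq⟩ := hpq
      induction e using Sym2.ind with
      | _ i j =>
        rw [Sym2.map_pair_eq] at heq
        rcases Sym2.eq_iff.mp heq with ⟨h1, h2⟩ | ⟨h1, h2⟩
        · exact ⟨(congrArg Prod.fst h1).symm, (congrArg Prod.fst h2).symm⟩
        · exact ⟨(congrArg Prod.fst h2).symm, (congrArg Prod.fst h1).symm⟩
    have hcross_notin : ∀ p q : V1 × V2, p.1 ≠ q.1 → s(p, q) ∉ F := fun p q hne h =>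
      hne ((hFin p q h).1.trans (hFin p q h).2.symm)
    obtain ⟨hindcon, hcompl⟩ := induce_compl_connected hκ x0
    obtain ⟨y0, hy0mem⟩ : ({x0}ᶜ : Set V1).Nonempty :=
      Set.nonempty_of_ncard_ne_zero (by omega)
    have hy0 : y0 ≠ x0 := hy0mem
    -- intact clouds
    have hcloudy : ∀ y, y ≠ x0 → ∀ i j : V2,
        ((replacementProduct G1 G2 ℓ).deleteEdges F).Reachable (y, i) (y, j) := by
      intro y hy i j
      have hsep : {e ∈ G2.edgeSet | Sym2.map (fun i => (y, i)) e ∈ F} = (∅ : Set (Sym2 V2)) := by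
        ext e
        induction e using Sym2.ind with
        | _ a b =>
          simp only [Set.mem_setOf_eq, Set.mem_empty_iff_false, iff_false, not_and]
          intro _ hmem
          rw [Sym2.map_pair_eq] at hmem
          exact hy (hFin _ _ hmem).1
      exact cloud_reach y (by rw [hsep, SimpleGraph.deleteEdges_empty]; exact hc2) i j
    -- reachability between intact clouds, via the induced graph on `{x0}ᶜ`
    have hreach2 : ∀ (a b : ({x0}ᶜ : Set V1)) (_ : (G1.induce ({x0}ᶜ : Set V1)).Walk a b)
        (i j : V2), ((replacementProduct G1 G2 ℓ).deleteEdges F).Reachable (a.1, i) (b.1, j) := by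
      intro a b w
      induction w with
      | @nil u => exact fun i j => hcloudy u.1 (Set.mem_compl_singleton_iff.mp u.2) i j
      | @cons u v w h p ih =>
        intro i j
        have huv : G1.Adj u.1 v.1 := h
        obtain ⟨i1, hi1⟩ := label_surj hℓ hr1 hd huv
        obtain ⟨j1, hj1⟩ := label_surj hℓ hr1 hd huv.symm
        have hadj : ((replacementProduct G1 G2 ℓ).deleteEdges F).Adj (u.1, i1) (v.1, j1) :=
          SimpleGraph.deleteEdges_adj.mpr
            ⟨Or.inr ⟨huv, hi1, hj1⟩, hcross_notin _ _ huv.ne⟩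
        exact ((hcloudy u.1 (Set.mem_compl_singleton_iff.mp u.2) i i1).trans hadj.reachable).trans (ih j1 j)
    obtain ⟨k0⟩ := hV2
    have hA : ∀ y, y ≠ x0 → ∀ i : V2,
        ((replacementProduct G1 G2 ℓ).deleteEdges F).Reachable (y, i) (y0, k0) := by
      intro y hy i
      obtain ⟨w⟩ := hindcon.preconnected ⟨y, hy⟩ ⟨y0, hy0⟩
      exact hreach2 ⟨y, hy⟩ ⟨y0, hy0⟩ w i k0
    have hall : ∀ p : V1 × V2,
        ((replacementProduct G1 G2 ℓ).deleteEdges F).Reachable p (y0, k0) := by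
      rintro ⟨a, b⟩
      by_cases ha : a = x0
      · subst ha
        have hadjG : G1.Adj a (ℓ a b) := hℓ.2 a b
        obtain ⟨j, hj⟩ := label_surj hℓ hr1 hd hadjG.symm
        have hadj : ((replacementProduct G1 G2 ℓ).deleteEdges F).Adj (a, b) (ℓ a b, j) :=
          SimpleGraph.deleteEdges_adj.mpr
            ⟨Or.inr ⟨hadjG, rfl, hj⟩, hcross_notin _ _ hadjG.ne⟩
        exact hadj.reachable.trans (hA _ hadjG.ne' j)
      · exact hA a ha b
    rw [SimpleGraph.connected_iff]
    exact ⟨fun p q => (hall p).trans (hall q).symm, ⟨(y0, k0)⟩⟩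
  · -- every cloud stays connected
    push_neg at hbig
    have hcloud : ∀ (x : V1) (i j : V2),
        ((replacementProduct G1 G2 ℓ).deleteEdges F).Reachable (x, i) (x, j) := fun x i j =>
      cloud_reach x (connected_deleteEdges_of_lt (fun e he => he.1) (hbig x)) i j
    set B : Set (Sym2 V1) :=
      {e ∈ G1.edgeSet | ∃ p q : V1 × V2, p.1 ≠ q.1 ∧ s(p, q) ∈ F ∧ e = s(p.1, q.1)} with hB
    have hBcard : B.ncard ≤ F.ncard := by
      calc B.ncard ≤ (Sym2.map (Prod.fst : V1 × V2 → V1) '' F).ncard := by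
            apply Set.ncard_le_ncard _ (Set.Finite.image _ (Set.toFinite F))
            rintro e ⟨_, p, q, _, hpq, rfl⟩
            exact ⟨s(p, q), hpq, by rw [Sym2.map_pair_eq]⟩
        _ ≤ F.ncard := Set.ncard_image_le (Set.toFinite F)
    have hBconn : (G1.deleteEdges B).Connected :=
      connected_deleteEdges_of_lt (fun e he => he.1) (lt_of_le_of_lt hBcard hF1)
    apply rp_conn_aux hℓ hr1 hd hV2 hBconn hcloud
    intro x y hxy i j hi hj hmem
    rw [SimpleGraph.deleteEdges_adj] at hxy
    exact hxy.2 ⟨G1.mem_edgeSet.mpr hxy.1, (x, i), (y, j), hxy.1.ne, hmem, rfl⟩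

end LowerLemmas

/-- Corollary 3.2. Let `G1` be a connected `δ1`-regular graph on `n`
vertices and `G2` a connected `δ2`-regular graph on `δ1` vertices. Then
(a) `λ(G1 ® G2) = 1` if `λ1 = 1`;
(b) `λ(G1 ® G2) = λ1` if `λ2 ≥ λ1`;
(c) `λ(G1 ® G2) = λ1` if `κ1 ≥ 2` and `λ2 ≥ λ1 - 1`;
(d) `λ(G1 ® G2) = min {λ1, δ2 + 1}` if `κ1 ≥ 2` and `λ2 = δ2`. -/
theorem edgeConn_replacementProduct_special_cases
    {V1 V2 : Type*} [Fintype V1] [Fintype V2] {n δ1 δ2 : ℕ}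
    (G1 : SimpleGraph V1) (G2 : SimpleGraph V2) (ℓ : V1 → V2 → V1)
    (hℓ : IsRPLabelling G1 ℓ)
    (hc1 : G1.Connected) (hc2 : G2.Connected)
    (hr1 : ∀ x : V1, (G1.neighborSet x).ncard = δ1)
    (hr2 : ∀ i : V2, (G2.neighborSet i).ncard = δ2)
    (hn : Fintype.card V1 = n) (hd : Fintype.card V2 = δ1) :
    (edgeConn G1 = 1 → edgeConn (replacementProduct G1 G2 ℓ) = 1) ∧
    (edgeConn G1 ≤ edgeConn G2 → edgeConn (replacementProduct G1 G2 ℓ) = edgeConn G1) ∧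
    (2 ≤ vertexConn G1 → edgeConn G1 - 1 ≤ edgeConn G2 →
      edgeConn (replacementProduct G1 G2 ℓ) = edgeConn G1) ∧
    (2 ≤ vertexConn G1 → edgeConn G2 = δ2 →
      edgeConn (replacementProduct G1 G2 ℓ) = min (edgeConn G1) (δ2 + 1)) := by
    classical
  by_cases hV2 : Nonempty V2
  · -- main case
    have hV1 : Nonempty V1 := hc1.nonempty
    have hδ1pos : 0 < δ1 := by rw [← hd]; exact Fintype.card_pos
    obtain ⟨x⟩ := hV1
    obtain ⟨y, hy⟩ : (G1.neighborSet x).Nonempty :=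
      Set.nonempty_of_ncard_ne_zero (by rw [hr1 x]; omega)
    have hV1two : ∃ a b : V1, a ≠ b := ⟨x, y, G1.ne_of_adj hy⟩
    -- G1 has a minimum edge cut of size `edgeConn G1`
    have hS1ne : {k | ∃ F : Set (Sym2 V1), F ⊆ G1.edgeSet ∧ F.ncard = k ∧
        ¬(G1.deleteEdges F).Connected}.Nonempty := by
      refine ⟨G1.edgeSet.ncard, G1.edgeSet, subset_rfl, rfl, ?_⟩
      rw [SimpleGraph.deleteEdges_edgeSet, sdiff_self]
      intro hcon
      obtain ⟨a, b, hab⟩ := hV1two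
      exact hab (SimpleGraph.reachable_bot.mp (hcon.preconnected a b))
    obtain ⟨Fstar, hsub, hcard, hdis⟩ := Nat.sInf_mem hS1ne
    have hcard' : Fstar.ncard = edgeConn G1 := hcard
    obtain ⟨Fhat, hFhsub, hFhcard, hFhdis⟩ := rp_cut_mem (G2 := G2) hℓ hr1 hd hV2 ⟨x⟩ hsub hdis
    have hub1 : edgeConn (replacementProduct G1 G2 ℓ) ≤ edgeConn G1 := by
      rw [← hcard', ← hFhcard]
      exact edgeConn_le_of_cut hFhsub hFhdis
    have hmem : ∃ F : Set (Sym2 (V1 × V2)), F ⊆ (replacementProduct G1 G2 ℓ).edgeSet ∧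
        F.ncard = edgeConn G1 ∧ ¬((replacementProduct G1 G2 ℓ).deleteEdges F).Connected :=
      ⟨Fhat, hFhsub, hFhcard.trans hcard', hFhdis⟩
    have hSRPne : {k | ∃ F : Set (Sym2 (V1 × V2)),
        F ⊆ (replacementProduct G1 G2 ℓ).edgeSet ∧ F.ncard = k ∧
        ¬((replacementProduct G1 G2 ℓ).deleteEdges F).Connected}.Nonempty :=
      ⟨edgeConn G1, hmem⟩
    have hRPconn : (replacementProduct G1 G2 ℓ).Connected := by
      have hcloud : ∀ (x : V1) (i j : V2),
          ((replacementProduct G1 G2 ℓ).deleteEdges (∅ : Set (Sym2 (V1 × V2)))).Reachable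
            (x, i) (x, j) := by
        intro x i j
        refine cloud_reach x ?_ i j
        have hsep : {e ∈ G2.edgeSet |
            Sym2.map (fun i => (x, i)) e ∈ (∅ : Set (Sym2 (V1 × V2)))} = (∅ : Set (Sym2 V2)) := by
          ext e; simp
        rw [hsep, SimpleGraph.deleteEdges_empty]
        exact hc2
      have h := rp_conn_aux hℓ hr1 hd hV2 (F := ∅) (B := ∅)
        (by rw [SimpleGraph.deleteEdges_empty]; exact hc1) hcloud
        (fun _ _ _ i j _ _ => Set.notMem_empty _)
      rwa [SimpleGraph.deleteEdges_empty] at h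
    refine ⟨?_, ?_, ?_, ?_⟩
    · -- (a)
      intro h1
      refine le_antisymm (h1 ▸ hub1) ?_
      by_contra hlt
      push_neg at hlt
      have h0 : sInf {k | ∃ F : Set (Sym2 (V1 × V2)),
          F ⊆ (replacementProduct G1 G2 ℓ).edgeSet ∧ F.ncard = k ∧
          ¬((replacementProduct G1 G2 ℓ).deleteEdges F).Connected} = 0 :=
        Nat.lt_one_iff.mp hlt
      rcases Nat.sInf_eq_zero.mp h0 with hz | hempty
      · obtain ⟨F, _, hc0, hd'⟩ := hz
        rw [(Set.ncard_eq_zero (Set.toFinite F)).mp hc0, SimpleGraph.deleteEdges_empty] at hd'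
        exact hd' hRPconn
      · rw [hempty] at hSRPne
        exact hSRPne.ne_empty rfl
    · -- (b)
      intro hle
      refine le_antisymm hub1 (le_csInf hSRPne ?_)
      rintro k ⟨F, hFsub, rfl, hFdis⟩
      by_contra hlt
      push_neg at hlt
      exact hFdis (rp_lower hℓ hc2 hr1 hd hV2 hlt (Or.inl (lt_of_lt_of_le hlt hle)))
    · -- (c)
      intro hκ hle
      refine le_antisymm hub1 (le_csInf hSRPne ?_)
      rintro k ⟨F, hFsub, rfl, hFdis⟩
      by_contra hlt
      push_neg at hlt
      exact hFdis (rp_lower hℓ hc2 hr1 hd hV2 hlt (Or.inr ⟨hκ, by omega⟩))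
    · -- (d)
      intro hκ hδ
      obtain ⟨a, b, hab⟩ := hV1two
      obtain ⟨Fs, hFssub, hFscard, hFsdis⟩ :=
        rp_star_cut_mem (G1 := G1) hℓ hr1 hd hr2 hV2 a b hab.symm
      have hub2 : edgeConn (replacementProduct G1 G2 ℓ) ≤ δ2 + 1 := by
        rw [← hFscard]
        exact edgeConn_le_of_cut hFssub hFsdis
      refine le_antisymm (le_min hub1 hub2) (le_csInf hSRPne ?_)
      rintro k ⟨F, hFsub, rfl, hFdis⟩
      by_contra hlt
      push_neg at hlt
      have h1 : F.ncard < edgeConn G1 := lt_of_lt_of_le hlt (min_le_left _ _)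
      have h2 : F.ncard ≤ edgeConn G2 := by
        have := lt_of_lt_of_le hlt (min_le_right _ _)
        omega
      exact hFdis (rp_lower hℓ hc2 hr1 hd hV2 h1 (Or.inr ⟨hκ, h2⟩))
  · -- degenerate case: `V2` empty
    have hE : IsEmpty V2 := not_nonempty_iff.mp hV2
    have hδ : δ1 = 0 := by rw [← hd]; exact Fintype.card_eq_zero
    have hnoadj : ∀ a b : V1, ¬G1.Adj a b := by
      intro a b h
      have h0 : (G1.neighborSet a).ncard = 0 := by rw [hr1 a, hδ]
      have h1 := (Set.ncard_eq_zero (Set.toFinite _)).mp h0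
      have : b ∈ G1.neighborSet a := h
      rw [h1] at this
      exact this
    have hconn1 : edgeConn G1 = 0 := by
      apply Nat.sInf_eq_zero.mpr
      right
      ext k
      simp only [Set.mem_setOf_eq, Set.mem_empty_iff_false, iff_false]
      rintro ⟨F, hFsub, hFcard, hFdis⟩
      have hE1 : G1.edgeSet = ∅ := by
        ext e
        induction e using Sym2.ind with
        | _ a b =>
          simp only [SimpleGraph.mem_edgeSet, Set.mem_empty_iff_false, iff_false]
          exact hnoadj a b
      rw [hE1, Set.subset_empty_iff] at hFsub
      rw [hFsub, SimpleGraph.deleteEdges_empty] at hFdis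
      exact hFdis hc1
    have hRP0 : edgeConn (replacementProduct G1 G2 ℓ) = 0 := by
      apply Nat.sInf_eq_zero.mpr
      left
      refine ⟨∅, Set.empty_subset _, Set.ncard_empty _, ?_⟩
      rw [SimpleGraph.deleteEdges_empty]
      intro hcon
      obtain ⟨⟨_, i⟩⟩ := hcon.nonempty
      exact hE.false i
    refine ⟨?_, ?_, ?_, ?_⟩
    · intro h1; rw [hconn1] at h1; omega
    · intro _; rw [hRP0, hconn1]
    · intro _ _; rw [hRP0, hconn1]
    · intro _ _; rw [hRP0, hconn1, Nat.zero_min]
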